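/- Let 1 ≤ k ≤ n and 1 ≤ l ≤ m with l ≤ k and n - k ≤ m - l. Then R_{k|n}(p)/R_{l|m}(p) is increasing in p ∈ (0,1), where R_{k|n}(p) = (1-p) h'_{k|n}(p)/(1-h_{k|n}(p)) and h_{k|n} is the k-out-of-n reliability function. -/

import Mathlib

noncomputable def koonB (k n : ℕ) : ℝ :=
  ∫ u in (0:ℝ)..1, u ^ (k - 1) * (1 - u) ^ (n - k)

noncomputable def koonRel (k n : ℕ) (p : ℝ) : ℝ :=
  (1 / koonB k n) * ∫ u in (0:ℝ)..p, u ^ (k - 1) * (1 - u) ^ (n - k)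

noncomputable def koonR (k n : ℕ) (p : ℝ) : ℝ :=
  (1 - p) * (p ^ (k - 1) * (1 - p) ^ (n - k) / koonB k n) / (1 - koonRel k n p)

open Finset

noncomputable def koonS (n k : ℕ) (p : ℝ) : ℝ :=
  ∑ i ∈ Finset.range k, (n.choose i : ℝ) * p ^ i * (1 - p) ^ (n - i)

noncomputable def koonQ (n k : ℕ) (x : ℝ) : ℝ :=
  ∑ j ∈ Finset.range k, (n.choose (k - 1 - j) : ℝ) * x ^ j

lemma koon_cont (k n : ℕ) : Continuous fun u : ℝ => u ^ (k - 1) * (1 - u) ^ (n - k) := by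
  fun_prop

lemma koonS_hasDerivAt (n k : ℕ) (hk : 1 ≤ k) (hkn : k ≤ n) (p : ℝ) :
    HasDerivAt (koonS n k)
      (-(((k : ℝ) * n.choose k) * (p ^ (k - 1) * (1 - p) ^ (n - k)))) p := by
  have key : ∀ i ∈ Finset.range k,
      HasDerivAt (fun q : ℝ => (n.choose i : ℝ) * q ^ i * (1 - q) ^ (n - i))
        ((fun j : ℕ => (j : ℝ) * n.choose j * p ^ (j - 1) * (1 - p) ^ (n - j)) i
          - (fun j : ℕ => (j : ℝ) * n.choose j * p ^ (j - 1) * (1 - p) ^ (n - j)) (i + 1)) p := by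
    intro i hi
    have hi' : i < k := Finset.mem_range.mp hi
    have hin : i ≤ n := le_of_lt (lt_of_lt_of_le hi' hkn)
    have h1 : HasDerivAt (fun q : ℝ => q ^ i) ((i : ℝ) * p ^ (i - 1)) p := hasDerivAt_pow i p
    have hc : HasDerivAt (fun q : ℝ => 1 - q) (-1) p := by
      simpa using (hasDerivAt_id p).const_sub 1
    have h2 : HasDerivAt (fun q : ℝ => (1 - q) ^ (n - i))
        ((((n - i : ℕ) : ℝ) * (1 - p) ^ (n - i - 1)) * (-1)) p :=
      (hasDerivAt_pow (n - i) (1 - p)).comp p hc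
    have h3 := (h1.const_mul ((n.choose i : ℝ))).mul h2
    refine h3.congr_deriv (Eq.symm ?_)
    have e1 : ((i + 1 : ℕ) : ℝ) * (n.choose (i + 1) : ℝ) = (n.choose i : ℝ) * ((n : ℝ) - i) := by
      have h := Nat.choose_succ_right_eq n i
      have h' : ((n.choose (i + 1) * (i + 1) : ℕ) : ℝ) = ((n.choose i * (n - i) : ℕ) : ℝ) := by
        exact_mod_cast congrArg (Nat.cast : ℕ → ℝ) h
      push_cast [Nat.cast_sub hin] at h'
      push_cast
      linarith
    have e2 : ((n - i : ℕ) : ℝ) = (n : ℝ) - i := by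
      push_cast [Nat.cast_sub hin]; ring
    have e3 : n - (i + 1) = n - i - 1 := by omega
    have e4 : (i + 1) - 1 = i := by omega
    simp only [e3, e4]
    rw [e2]
    linear_combination (-(p ^ i * (1 - p) ^ (n - i - 1))) * e1
  have hsum := HasDerivAt.fun_sum key
  have e := Finset.sum_range_sub'
    (fun j : ℕ => (j : ℝ) * n.choose j * p ^ (j - 1) * (1 - p) ^ (n - j)) k
  rw [e] at hsum
  simp only [Nat.cast_zero, zero_mul, zero_sub] at hsum
  unfold koonS
  refine hsum.congr_deriv (Eq.symm ?_)
  push_cast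
  ring

lemma koon_integral_tail (k n : ℕ) (hk : 1 ≤ k) (hkn : k ≤ n) (p : ℝ) :
    ∫ u in p..(1:ℝ), u ^ (k - 1) * (1 - u) ^ (n - k)
      = koonS n k p / ((k : ℝ) * n.choose k) := by
  have hc : (0 : ℝ) < (k : ℝ) * n.choose k := by
    have := Nat.choose_pos hkn
    positivity
  have hderiv : ∀ x ∈ Set.uIcc p (1 : ℝ),
      HasDerivAt (fun q : ℝ => -(koonS n k q) / ((k : ℝ) * n.choose k))
        (x ^ (k - 1) * (1 - x) ^ (n - k)) x := by
    intro x _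
    have h := ((koonS_hasDerivAt n k hk hkn x).neg).div_const ((k : ℝ) * n.choose k)
    refine h.congr_deriv (Eq.symm ?_)
    have hnc : ((n.choose k : ℕ) : ℝ) ≠ 0 := by exact_mod_cast (Nat.choose_pos hkn).ne'
    field_simp
  have hint : IntervalIntegrable (fun u : ℝ => u ^ (k - 1) * (1 - u) ^ (n - k))
      MeasureTheory.volume p 1 := (koon_cont k n).intervalIntegrable _ _
  rw [intervalIntegral.integral_eq_sub_of_hasDerivAt hderiv hint]
  have hS1 : koonS n k 1 = 0 := by
    apply Finset.sum_eq_zero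
    intro i hi
    have : n - i ≠ 0 := by
      have := Finset.mem_range.mp hi; omega
    simp [this]
  rw [hS1]
  ring

lemma koonB_eq (k n : ℕ) (hk : 1 ≤ k) (hkn : k ≤ n) :
    koonB k n = 1 / ((k : ℝ) * n.choose k) := by
  have h := koon_integral_tail k n hk hkn 0
  have hS0 : koonS n k 0 = 1 := by
    unfold koonS
    rw [Finset.sum_eq_single 0]
    · simp
    · intro b _ hb0; simp [zero_pow hb0]
    · intro h; exact absurd (Finset.mem_range.2 (by omega)) h
  rw [hS0] at h
  simpa [koonB] using h

lemma one_sub_koonRel (k n : ℕ) (hk : 1 ≤ k) (hkn : k ≤ n) (p : ℝ) :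
    1 - koonRel k n p = koonS n k p := by
  have hc : (0 : ℝ) < (k : ℝ) * n.choose k := by
    have := Nat.choose_pos hkn
    positivity
  have hint1 : IntervalIntegrable (fun u : ℝ => u ^ (k - 1) * (1 - u) ^ (n - k))
      MeasureTheory.volume 0 p := (koon_cont k n).intervalIntegrable _ _
  have hint2 : IntervalIntegrable (fun u : ℝ => u ^ (k - 1) * (1 - u) ^ (n - k))
      MeasureTheory.volume p 1 := (koon_cont k n).intervalIntegrable _ _
  have hsplit := intervalIntegral.integral_add_adjacent_intervals hint1 hint2
  have h1 := koon_integral_tail k n hk hkn p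
  have h0 : (∫ u in (0:ℝ)..1, u ^ (k - 1) * (1 - u) ^ (n - k)) = 1 / ((k : ℝ) * n.choose k) := by
    rw [← koonB_eq k n hk hkn]; rfl
  have h2 : (∫ u in (0:ℝ)..p, u ^ (k - 1) * (1 - u) ^ (n - k))
      = 1 / ((k : ℝ) * n.choose k) - koonS n k p / ((k : ℝ) * n.choose k) := by
    rw [← h0, ← h1]; linarith [hsplit]
  unfold koonRel
  rw [koonB_eq k n hk hkn, h2]
  have hnc : ((n.choose k : ℕ) : ℝ) ≠ 0 := by exact_mod_cast (Nat.choose_pos hkn).ne'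
  field_simp
  ring

lemma koonS_eq (n k : ℕ) (hk : 1 ≤ k) (hkn : k ≤ n) {p : ℝ} (hp : p ≠ 0) :
    koonS n k p = p ^ (k - 1) * (1 - p) ^ (n - k + 1) * koonQ n k ((1 - p) / p) := by
  unfold koonS koonQ
  rw [← Finset.sum_range_reflect (fun i => (n.choose i : ℝ) * p ^ i * (1 - p) ^ (n - i)) k,
    Finset.mul_sum]
  apply Finset.sum_congr rfl
  intro j hj
  have hj' : j < k := Finset.mem_range.mp hj
  have e1 : k - 1 = (k - 1 - j) + j := by omega
  have e2 : n - (k - 1 - j) = (n - k + 1) + j := by omega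
  rw [e2, show p ^ (k - 1) = p ^ ((k - 1 - j) + j) from by rw [← e1], pow_add, pow_add, div_pow]
  field_simp
  ring

lemma koonQ_pos (n k : ℕ) (hk : 1 ≤ k) (hkn : k ≤ n) {x : ℝ} (hx : 0 ≤ x) :
    0 < koonQ n k x := by
  unfold koonQ
  apply Finset.sum_pos'
  · intro j _
    positivity
  · refine ⟨0, Finset.mem_range.2 (by omega), ?_⟩
    have h0 : 0 < n.choose (k - 1 - 0) := Nat.choose_pos (by omega)
    have h1 : (0:ℝ) < (n.choose (k - 1 - 0) : ℝ) := by exact_mod_cast h0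
    simpa using h1

lemma koonR_eq (k n : ℕ) (hk : 1 ≤ k) (hkn : k ≤ n) {p : ℝ} (hp : p ∈ Set.Ioo (0:ℝ) 1) :
    koonR k n p = ((k : ℝ) * n.choose k) / koonQ n k ((1 - p) / p) := by
  obtain ⟨hp0, hp1⟩ := hp
  have hc : (0 : ℝ) < (k : ℝ) * n.choose k := by
    have := Nat.choose_pos hkn
    positivity
  have hx : (0:ℝ) ≤ (1 - p) / p := div_nonneg (by linarith) hp0.le
  have hQ : 0 < koonQ n k ((1 - p) / p) := koonQ_pos n k hk hkn hx
  have h1p : (0:ℝ) < 1 - p := by linarith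
  unfold koonR
  rw [one_sub_koonRel k n hk hkn, koonB_eq k n hk hkn, koonS_eq n k hk hkn (ne_of_gt hp0),
    pow_succ]
  have hA : p ^ (k - 1) * ((1 - p) ^ (n - k) * (1 - p)) ≠ 0 := by positivity
  field_simp

lemma koon_choose_step (m n d s : ℕ) (hn : n ≤ m + d) (hr : s + d + 1 ≤ n) :
    m.choose s * n.choose (s + d + 1) ≤ m.choose (s + 1) * n.choose (s + d) := by
  have key : (s + 1) * (n - (s + d)) ≤ (s + d + 1) * (m - s) :=
    Nat.mul_le_mul (by omega) (by omega)
  have e1 : m.choose (s + 1) * (s + 1) = m.choose s * (m - s) := Nat.choose_succ_right_eq m s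
  have e2 : n.choose (s + d + 1) * (s + d + 1) = n.choose (s + d) * (n - (s + d)) :=
    Nat.choose_succ_right_eq n (s + d)
  have H : (m.choose s * n.choose (s + d + 1)) * ((s + 1) * (s + d + 1))
      ≤ (m.choose (s + 1) * n.choose (s + d)) * ((s + 1) * (s + d + 1)) := by
    calc (m.choose s * n.choose (s + d + 1)) * ((s + 1) * (s + d + 1))
        = (m.choose s * (s + 1)) * (n.choose (s + d + 1) * (s + d + 1)) := by ring
      _ = (m.choose s * (s + 1)) * (n.choose (s + d) * (n - (s + d))) := by rw [e2]
      _ = (m.choose s * n.choose (s + d)) * ((s + 1) * (n - (s + d))) := by ring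
      _ ≤ (m.choose s * n.choose (s + d)) * ((s + d + 1) * (m - s)) :=
          Nat.mul_le_mul_left _ key
      _ = (m.choose s * (m - s)) * (n.choose (s + d) * (s + d + 1)) := by ring
      _ = (m.choose (s + 1) * (s + 1)) * (n.choose (s + d) * (s + d + 1)) := by rw [e1]
      _ = (m.choose (s + 1) * n.choose (s + d)) * ((s + 1) * (s + d + 1)) := by ring
  exact Nat.le_of_mul_le_mul_right H (by positivity)

lemma koon_choose_chain (m n d s : ℕ) (hn : n ≤ m + d) :
    ∀ t, s + t + d ≤ n →
      m.choose s * n.choose (s + t + d) ≤ m.choose (s + t) * n.choose (s + d) := by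
  intro t
  induction t with
  | zero => simp
  | succ t ih =>
    intro h
    have ih' := ih (by omega)
    have hstep := koon_choose_step m n d (s + t) hn (by omega)
    have pos : 0 < n.choose (s + t + d) := Nat.choose_pos (by omega)
    have H : (m.choose s * n.choose (s + (t + 1) + d)) * n.choose (s + t + d)
        ≤ (m.choose (s + (t + 1)) * n.choose (s + d)) * n.choose (s + t + d) := by
      calc (m.choose s * n.choose (s + (t + 1) + d)) * n.choose (s + t + d)
          = (m.choose s * n.choose (s + t + d)) * n.choose (s + t + d + 1) := by
            rw [show s + (t + 1) + d = s + t + d + 1 from by omega]; ring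
        _ ≤ (m.choose (s + t) * n.choose (s + d)) * n.choose (s + t + d + 1) :=
            Nat.mul_le_mul_right _ ih'
        _ = (m.choose (s + t) * n.choose (s + t + d + 1)) * n.choose (s + d) := by ring
        _ ≤ (m.choose (s + t + 1) * n.choose (s + t + d)) * n.choose (s + d) :=
            Nat.mul_le_mul_right _ hstep
        _ = (m.choose (s + (t + 1)) * n.choose (s + d)) * n.choose (s + t + d) := by ring
    exact Nat.le_of_mul_le_mul_right H pos

lemma koon_cross_sum (K : ℕ) (A B : ℕ → ℝ) (hA : ∀ j, 0 ≤ A j) (hB : ∀ j, 0 ≤ B j)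
    (hkey : ∀ i j, i ≤ j → B j * A i ≤ B i * A j) (x y : ℝ) (hy : 0 ≤ y) (hxy : y ≤ x) :
    (∑ i ∈ Finset.range K, B i * x ^ i) * (∑ j ∈ Finset.range K, A j * y ^ j)
      ≤ (∑ i ∈ Finset.range K, B i * y ^ i) * (∑ j ∈ Finset.range K, A j * x ^ j) := by
  have hx : 0 ≤ x := hy.trans hxy
  set c : ℕ → ℕ → ℝ := fun i j => B i * A j * (y ^ i * x ^ j - x ^ i * y ^ j) with hc
  have hmono : ∀ i j, i ≤ j → x ^ i * y ^ j ≤ x ^ j * y ^ i := by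
    intro i j hij
    obtain ⟨e, rfl⟩ : ∃ e, j = i + e := ⟨j - i, by omega⟩
    rw [pow_add, pow_add]
    have h5 : y ^ e ≤ x ^ e := pow_le_pow_left₀ hy hxy e
    have hxi : (0:ℝ) ≤ x ^ i := by positivity
    have hyi : (0:ℝ) ≤ y ^ i := by positivity
    have h4 : x ^ i * y ^ i * y ^ e ≤ x ^ i * y ^ i * x ^ e :=
      mul_le_mul_of_nonneg_left h5 (mul_nonneg hxi hyi)
    nlinarith [h4]
  have hpair : ∀ i j, 0 ≤ c i j + c j i := by
    intro i j
    have habs : ∀ i j, i ≤ j → 0 ≤ c i j + c j i := by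
      intro i j hij
      have h1 : 0 ≤ B i * A j - B j * A i := sub_nonneg.2 (hkey i j hij)
      have h2 : 0 ≤ x ^ j * y ^ i - x ^ i * y ^ j := sub_nonneg.2 (hmono i j hij)
      have h3 := mul_nonneg h1 h2
      have e : c i j + c j i
          = (B i * A j - B j * A i) * (x ^ j * y ^ i - x ^ i * y ^ j) := by
        simp only [hc]; ring
      linarith [e ▸ h3]
    rcases le_total i j with hij | hij
    · exact habs i j hij
    · have := habs j i hij
      linarith
  have hsum : 0 ≤ ∑ i ∈ Finset.range K, ∑ j ∈ Finset.range K, c i j := by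
    have h2 : (2:ℝ) * ∑ i ∈ Finset.range K, ∑ j ∈ Finset.range K, c i j
        = ∑ i ∈ Finset.range K, ∑ j ∈ Finset.range K, (c i j + c j i) := by
      have hcomm : (∑ i ∈ Finset.range K, ∑ j ∈ Finset.range K, c j i)
          = ∑ i ∈ Finset.range K, ∑ j ∈ Finset.range K, c i j :=
        Finset.sum_comm
      simp only [Finset.sum_add_distrib]
      rw [hcomm]; ring
    have h3 : 0 ≤ ∑ i ∈ Finset.range K, ∑ j ∈ Finset.range K, (c i j + c j i) :=
      Finset.sum_nonneg fun i _ => Finset.sum_nonneg fun j _ => hpair i j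
    linarith
  have hdiff : (∑ i ∈ Finset.range K, B i * y ^ i) * (∑ j ∈ Finset.range K, A j * x ^ j)
      - (∑ i ∈ Finset.range K, B i * x ^ i) * (∑ j ∈ Finset.range K, A j * y ^ j)
      = ∑ i ∈ Finset.range K, ∑ j ∈ Finset.range K, c i j := by
    rw [Finset.sum_mul_sum, Finset.sum_mul_sum, ← Finset.sum_sub_distrib]
    apply Finset.sum_congr rfl
    intro i _
    rw [← Finset.sum_sub_distrib]
    apply Finset.sum_congr rfl
    intro j _
    simp only [hc]
    ring
  linarith

lemma koon_crossQ (k n l m : ℕ) (hk : 1 ≤ k) (hkn : k ≤ n)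
    (hl : 1 ≤ l) (hlm : l ≤ m) (hlk : l ≤ k) (hnm : n + l ≤ m + k)
    {x y : ℝ} (hy : 0 ≤ y) (hxy : y ≤ x) :
    koonQ m l x * koonQ n k y ≤ koonQ m l y * koonQ n k x := by
  set A : ℕ → ℝ := fun j => (n.choose (k - 1 - j) : ℝ) with hAdef
  set B : ℕ → ℝ := fun i => if i < l then (m.choose (l - 1 - i) : ℝ) else 0 with hBdef
  have hQl : ∀ z : ℝ, koonQ m l z = ∑ i ∈ Finset.range k, B i * z ^ i := by
    intro z
    unfold koonQ
    rw [← Finset.sum_subset (Finset.range_subset_range.2 hlk)]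
    · apply Finset.sum_congr rfl
      intro i hi
      have : i < l := Finset.mem_range.mp hi
      simp [hBdef, this]
    · intro i _ hi
      have : ¬ i < l := fun h => hi (Finset.mem_range.2 h)
      simp [hBdef, this]
  have hQk : ∀ z : ℝ, koonQ n k z = ∑ j ∈ Finset.range k, A j * z ^ j := by
    intro z; rfl
  have hA : ∀ j, 0 ≤ A j := fun j => by positivity
  have hB : ∀ j, 0 ≤ B j := by
    intro j; simp only [hBdef]; split <;> positivity
  have hkey : ∀ i j, i ≤ j → B j * A i ≤ B i * A j := by
    intro i j hij
    by_cases hjl : j < l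
    · have hil : i < l := lt_of_le_of_lt hij hjl
      simp only [hBdef, hAdef, if_pos hjl, if_pos hil]
      have hnat : m.choose (l - 1 - j) * n.choose (k - 1 - i)
          ≤ m.choose (l - 1 - i) * n.choose (k - 1 - j) := by
        have hchain := koon_choose_chain m n (k - l) (l - 1 - j) (by omega) (j - i) (by omega)
        rw [show l - 1 - j + (j - i) + (k - l) = k - 1 - i from by omega,
          show l - 1 - j + (j - i) = l - 1 - i from by omega,
          show l - 1 - j + (k - l) = k - 1 - j from by omega] at hchain
        exact hchain
      exact_mod_cast hnat
    · simp only [hBdef, if_neg hjl]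
      rw [zero_mul]
      exact mul_nonneg (hB i) (hA j)
  rw [hQl x, hQl y, hQk x, hQk y]
  exact koon_cross_sum k A B hA hB hkey x y hy hxy

theorem koonR_ratio_increasing (k n l m : ℕ) (hk : 1 ≤ k) (hkn : k ≤ n)
    (hl : 1 ≤ l) (hlm : l ≤ m) (hlk : l ≤ k) (hnm : n - k ≤ m - l) :
    MonotoneOn (fun p => koonR k n p / koonR l m p) (Set.Ioo (0 : ℝ) 1) := by
  intro p hp q hq hpq
  obtain ⟨hp0, hp1⟩ := hp
  obtain ⟨hq0, hq1⟩ := hq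
  set x : ℝ := (1 - p) / p with hxdef
  set y : ℝ := (1 - q) / q with hydef
  have hy : 0 ≤ y := div_nonneg (by linarith) hq0.le
  have hxy : y ≤ x := by
    rw [hxdef, hydef, div_le_div_iff₀ hq0 hp0]
    nlinarith
  have hx : 0 ≤ x := hy.trans hxy
  have hck : (0 : ℝ) < (k : ℝ) * n.choose k := by
    have := Nat.choose_pos hkn; positivity
  have hcl : (0 : ℝ) < (l : ℝ) * m.choose l := by
    have := Nat.choose_pos hlm; positivity
  have hQkx : 0 < koonQ n k x := koonQ_pos n k hk hkn hx
  have hQky : 0 < koonQ n k y := koonQ_pos n k hk hkn hy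
  have hQlx : 0 < koonQ m l x := koonQ_pos m l hl hlm hx
  have hQly : 0 < koonQ m l y := koonQ_pos m l hl hlm hy
  have hcross : koonQ m l x * koonQ n k y ≤ koonQ m l y * koonQ n k x :=
    koon_crossQ k n l m hk hkn hl hlm hlk (by omega) hy hxy
  show koonR k n p / koonR l m p ≤ koonR k n q / koonR l m q
  rw [koonR_eq k n hk hkn ⟨hp0, hp1⟩, koonR_eq l m hl hlm ⟨hp0, hp1⟩,
    koonR_eq k n hk hkn ⟨hq0, hq1⟩, koonR_eq l m hl hlm ⟨hq0, hq1⟩]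
  rw [div_le_div_iff₀ (div_pos hcl hQlx) (div_pos hcl hQly)]
  rw [div_mul_div_comm, div_mul_div_comm]
  rw [div_le_div_iff₀ (mul_pos hQkx hQly) (mul_pos hQky hQlx)]
  have hnn : (0:ℝ) ≤ ((k : ℝ) * n.choose k) * ((l : ℝ) * m.choose l) :=
    le_of_lt (mul_pos hck hcl)
  have hQ : koonQ n k y * koonQ m l x ≤ koonQ n k x * koonQ m l y := by nlinarith [hcross]
  nlinarith [mul_le_mul_of_nonneg_left hQ hnn]
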